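/- Let 1 ≤ r ≤ n be integers and let C₁ and C₂ be linear codes of length n over 𝔽_q, each with minimum distance at least n − r + 1. Let C be a nonzero linear subcode of C₁ ⊗ C₂ with dimension k (so 1 ≤ k ≤ r²) and minimum distance d. Then d ≤ ( ⌈√(r² − k + 1)⌉ + n − r )². -/

import Mathlib

open scoped Classical

lemma card_filter_lt (n r : ℕ) (h : r ≤ n) :
    (Finset.univ.filter fun i : Fin n => (i : ℕ) < r).card = r := by
  conv_rhs => rw [← Finset.card_range r]
  refine Finset.card_bij' (fun i _ => (i : ℕ))
    (fun m hm => (⟨m, lt_of_lt_of_le (Finset.mem_range.mp hm) h⟩ : Fin n))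
    ?_ ?_ ?_ ?_
  · intro a ha; simp at ha ⊢; omega
  · intro a ha; simp at ha ⊢; omega
  · intro a ha; rfl
  · intro a ha; rfl

lemma card_filter_ge (n r : ℕ) (h : r ≤ n) :
    (Finset.univ.filter fun i : Fin n => r ≤ (i : ℕ)).card = n - r := by
  have h2 := card_filter_lt n r h
  have h3 : (Finset.univ.filter fun i : Fin n => r ≤ (i : ℕ))
      = Finset.univ.filter fun i : Fin n => ¬ ((i : ℕ) < r) := by
    apply Finset.filter_congr; intro i _; simp
  have h4 := Finset.card_filter_add_card_filter_not
    (s := (Finset.univ : Finset (Fin n))) (p := fun i : Fin n => (i : ℕ) < r)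
  rw [h3]
  simp only [Finset.card_univ, Fintype.card_fin] at h4
  omega


/-- Hamming weight of a matrix: the number of nonzero entries. -/
noncomputable def matWeight {K : Type*} [Zero K] {m n : ℕ}
    (c : Matrix (Fin m) (Fin n) K) : ℕ :=
  (Finset.univ.filter fun p : Fin m × Fin n => c p.1 p.2 ≠ 0).card

/-- Membership in the tensor product code `C₁ ⊗ C₂`: every column (transposed) lies in
`C₁` and every row lies in `C₂`. -/
def MemProd {K : Type*} [Field K] {m n : ℕ}
    (C₁ : Submodule K (Fin m → K)) (C₂ : Submodule K (Fin n → K))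
    (c : Matrix (Fin m) (Fin n) K) : Prop :=
  (∀ j, (fun i => c i j) ∈ C₁) ∧ (∀ i, (fun j => c i j) ∈ C₂)

/-- Let `1 ≤ r ≤ n`, let `C₁, C₂` be linear codes of length `n` over a
finite field, each of minimum distance at least `n − r + 1`, and let `C ⊆ C₁ ⊗ C₂` be a
nonzero linear subcode of dimension `k` and minimum distance `d`.  Then
`d ≤ (⌈√(r² − k + 1)⌉ + n − r)²`. -/
theorem stmt_8 (q : ℕ) (K : Type*) [Field K] [Fintype K] (hq : Fintype.card K = q)
    (n r : ℕ) (h1 : 1 ≤ r) (hrn : r ≤ n)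
    (C₁ C₂ : Submodule K (Fin n → K))
    (hC₁ : ∀ c ∈ C₁, c ≠ 0 → n - r + 1 ≤ (Finset.univ.filter fun i => c i ≠ 0).card)
    (hC₂ : ∀ c ∈ C₂, c ≠ 0 → n - r + 1 ≤ (Finset.univ.filter fun i => c i ≠ 0).card)
    (C : Submodule K (Matrix (Fin n) (Fin n) K))
    (hC : ∀ c ∈ C, MemProd C₁ C₂ c) (hCne : C ≠ ⊥)
    (k : ℕ) (hk : Module.finrank K ↥C = k)
    (d : ℕ) (hd : IsLeast {w : ℕ | ∃ c ∈ C, c ≠ 0 ∧ matWeight c = w} d) :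
    (d : ℝ) ≤
      ((⌈Real.sqrt ((r : ℝ) ^ 2 - (k : ℝ) + 1)⌉ : ℝ) + (n : ℝ) - (r : ℝ)) ^ 2 := by
  classical
  have hk1 : 1 ≤ k := by
    rw [← hk]
    have : Nontrivial ↥C := Submodule.nontrivial_iff_ne_bot.mpr hCne
    exact Module.finrank_pos
  set s : ℕ := ⌈Real.sqrt ((r : ℝ) ^ 2 - (k : ℝ) + 1)⌉₊ with hs
  have hsr : s ≤ r := by
    apply Nat.ceil_le.mpr
    calc Real.sqrt ((r:ℝ)^2 - k + 1) ≤ Real.sqrt ((r:ℝ)^2) := by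
          apply Real.sqrt_le_sqrt
          have : (1:ℝ) ≤ k := by exact_mod_cast hk1
          linarith
      _ = r := Real.sqrt_sq (by positivity)
  have hkey : r * r < s * s + k := by
    have hle : Real.sqrt ((r:ℝ)^2 - k + 1) ≤ (s:ℝ) := Nat.le_ceil _
    by_cases hc : (r:ℝ)^2 - (k:ℝ) + 1 ≤ 0
    · have : (r:ℝ)*r < (s:ℝ)*s + k := by nlinarith
      exact_mod_cast this
    · push_neg at hc
      have h2 : (r:ℝ)^2 - k + 1 ≤ (s:ℝ)^2 := by
        have hsq := Real.sq_sqrt (le_of_lt hc)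
        nlinarith [Real.sqrt_nonneg ((r:ℝ)^2 - (k:ℝ) + 1)]
      have : (r:ℝ)*r < (s:ℝ)*s + k := by nlinarith
      exact_mod_cast this
  set A : Finset (Fin n) := Finset.univ.filter fun i => (i:ℕ) < r with hA
  set B : Finset (Fin n) := Finset.univ.filter fun i => (i:ℕ) < s with hB
  have hBA : B ⊆ A := by
    intro i hi
    simp only [hA, hB, Finset.mem_filter, Finset.mem_univ, true_and] at hi ⊢
    omega
  set T : Finset (Fin n × Fin n) := (A ×ˢ A) \ (B ×ˢ B) with hT
  have hTcard : T.card = r * r - s * s := by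
    rw [hT, Finset.card_sdiff_of_subset (Finset.product_subset_product hBA hBA)]
    simp [Finset.card_product, hA, hB, card_filter_lt n r hrn,
      card_filter_lt n s (le_trans hsr hrn)]
  have hTk : T.card < k := by omega
  obtain ⟨c, hcC, hcne, hcT⟩ : ∃ c, c ∈ C ∧ c ≠ 0 ∧ ∀ p ∈ T, c p.1 p.2 = 0 := by
    let φ : ↥C →ₗ[K] ({p // p ∈ T} → K) :=
      { toFun := fun x t => (x : Matrix (Fin n) (Fin n) K) t.1.1 t.1.2
        map_add' := by intros; rfl
        map_smul' := by intros; rfl }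
    have hninj : ¬ Function.Injective φ := by
      intro hinj
      have hle := LinearMap.finrank_le_finrank_of_injective hinj
      rw [hk, Module.finrank_pi] at hle
      rw [Fintype.card_coe] at hle
      omega
    rw [Function.not_injective_iff] at hninj
    obtain ⟨x, y, hxy, hne⟩ := hninj
    refine ⟨(x : Matrix (Fin n) (Fin n) K) - y, sub_mem x.2 y.2, ?_, ?_⟩
    · intro h0
      apply hne
      apply Subtype.ext
      exact sub_eq_zero.mp h0
    · intro p hp
      have h := congrFun hxy ⟨p, hp⟩
      simp only [φ, LinearMap.coe_mk, AddHom.coe_mk] at h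
      simp [Matrix.sub_apply]; exact sub_eq_zero.mpr h
  have hzero : ∀ p : Fin n × Fin n,
      ((p.1:ℕ) < r ∧ (p.2:ℕ) < r ∧ ¬((p.1:ℕ) < s ∧ (p.2:ℕ) < s)) → c p.1 p.2 = 0 := by
    intro p hp
    apply hcT
    simp only [hT, hA, hB, Finset.mem_sdiff, Finset.mem_product, Finset.mem_filter,
      Finset.mem_univ, true_and]
    tauto
  have hcol : ∀ j : Fin n, s ≤ (j:ℕ) → (j:ℕ) < r → ∀ i, c i j = 0 := by
    intro j hj1 hj2
    by_contra hcol0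
    push_neg at hcol0
    obtain ⟨i0, hi0⟩ := hcol0
    have hmem := (hC c hcC).1 j
    have hne : (fun i => c i j) ≠ 0 := fun h => hi0 (congrFun h i0)
    have hw : n - r + 1 ≤ (Finset.univ.filter fun i => c i j ≠ 0).card :=
      hC₁ _ hmem hne
    have hsub : (Finset.univ.filter fun i => c i j ≠ 0)
        ⊆ Finset.univ.filter fun i : Fin n => r ≤ (i:ℕ) := by
      intro i hi
      simp only [Finset.mem_filter, Finset.mem_univ, true_and] at hi ⊢
      by_contra h
      push_neg at h
      exact hi (hzero (i, j) ⟨h, hj2, show ¬((i:ℕ) < s ∧ (j:ℕ) < s) by omega⟩)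
    have hfin : n - r + 1 ≤ n - r :=
      le_trans hw (le_trans (Finset.card_le_card hsub)
        (le_of_eq (card_filter_ge n r hrn)))
    omega
  have hrow : ∀ i : Fin n, s ≤ (i:ℕ) → (i:ℕ) < r → ∀ j, c i j = 0 := by
    intro i hi1 hi2
    by_contra hrow0
    push_neg at hrow0
    obtain ⟨j0, hj0⟩ := hrow0
    have hmem := (hC c hcC).2 i
    have hne : (fun j => c i j) ≠ 0 := fun h => hj0 (congrFun h j0)
    have hw : n - r + 1 ≤ (Finset.univ.filter fun j => c i j ≠ 0).card :=
      hC₂ _ hmem hne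
    have hsub : (Finset.univ.filter fun j => c i j ≠ 0)
        ⊆ Finset.univ.filter fun j : Fin n => r ≤ (j:ℕ) := by
      intro j hj
      simp only [Finset.mem_filter, Finset.mem_univ, true_and] at hj ⊢
      by_contra h
      push_neg at h
      exact hj (hzero (i, j) ⟨hi2, h, show ¬((i:ℕ) < s ∧ (j:ℕ) < s) by omega⟩)
    have hfin : n - r + 1 ≤ n - r :=
      le_trans hw (le_trans (Finset.card_le_card hsub)
        (le_of_eq (card_filter_ge n r hrn)))
    omega
  set R : Finset (Fin n) := Finset.univ.filter fun i : Fin n => (i:ℕ) < s ∨ r ≤ (i:ℕ)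
    with hR
  have hRcard : R.card = s + (n - r) := by
    have hunion : R = (Finset.univ.filter fun i : Fin n => (i:ℕ) < s)
        ∪ (Finset.univ.filter fun i : Fin n => r ≤ (i:ℕ)) := by
      rw [hR, ← Finset.filter_or]
    rw [hunion, Finset.card_union_of_disjoint, card_filter_lt n s (le_trans hsr hrn),
      card_filter_ge n r hrn]
    rw [Finset.disjoint_filter]
    intro i _ h1 h2
    omega
  have hsupp : (Finset.univ.filter fun p : Fin n × Fin n => c p.1 p.2 ≠ 0) ⊆ R ×ˢ R := by
    intro p hp
    simp only [Finset.mem_filter, Finset.mem_univ, true_and] at hp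
    simp only [Finset.mem_product, hR, Finset.mem_filter, Finset.mem_univ, true_and]
    constructor
    · by_contra h
      push_neg at h
      exact hp (hrow p.1 h.1 (by omega) p.2)
    · by_contra h
      push_neg at h
      exact hp (hcol p.2 h.1 (by omega) p.1)
  have hwle : matWeight c ≤ (s + (n - r)) * (s + (n - r)) := by
    have := Finset.card_le_card hsupp
    rw [Finset.card_product, hRcard] at this
    exact this
  have hdle : d ≤ (s + (n - r)) * (s + (n - r)) :=
    le_trans (hd.2 ⟨c, hcC, hcne, rfl⟩) hwle
  have hreal : (d:ℝ) ≤ ((s:ℝ) + ((n:ℝ) - (r:ℝ))) * ((s:ℝ) + ((n:ℝ) - (r:ℝ))) := by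
    have h2 : (d:ℝ) ≤ ((s + (n - r) : ℕ) : ℝ) * ((s + (n - r) : ℕ) : ℝ) := by
      exact_mod_cast hdle
    rwa [Nat.cast_add, Nat.cast_sub hrn] at h2
  rw [← natCast_ceil_eq_intCast_ceil (Real.sqrt_nonneg _)]
  rw [← hs]
  nlinarith [hreal]
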